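/- Let (α_j) be a sequence of pairwise distinct nonzero complex numbers with ∑_{j=1}^∞ 1/|α_j| < ∞, and let h(z) = ∏_{j=1}^∞ (1 - z/α_j)^2. If f is an entire function vanishing to order at least 2 at each α_j, then f is divisible by h, i.e., f = h·u for some entire function u. -/

import Mathlib

open Filter Topology Metric

private lemma prod_est (F : Finset ℕ) (c : ℕ → ℂ) (hc : ∑ i ∈ F, ‖c i‖ ≤ 1 / 2) :
    ‖(∏ i ∈ F, (1 + c i)) - 1‖ ≤ 2 * ∑ i ∈ F, ‖c i‖ := by
  classical
  revert hc
  induction F using Finset.induction_on with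
  | empty => intro _; simp
  | @insert a F ha ih =>
    intro hc
    rw [Finset.sum_insert ha] at hc ⊢
    rw [Finset.prod_insert ha]
    have hS : (0:ℝ) ≤ ∑ i ∈ F, ‖c i‖ := Finset.sum_nonneg fun i _ => norm_nonneg _
    have hca : (0:ℝ) ≤ ‖c a‖ := norm_nonneg _
    have h1 := ih (by linarith)
    have key : (1 + c a) * ∏ i ∈ F, (1 + c i) - 1
        = ((∏ i ∈ F, (1 + c i)) - 1) * (1 + c a) + c a := by ring
    rw [key]
    have h2 : ‖(1:ℂ) + c a‖ ≤ 1 + ‖c a‖ := (norm_add_le _ _).trans (by simp)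
    have h3 : ‖((∏ i ∈ F, (1 + c i)) - 1) * (1 + c a)‖
        ≤ (2 * ∑ i ∈ F, ‖c i‖) * (1 + ‖c a‖) := by
      rw [norm_mul]
      exact mul_le_mul h1 h2 (norm_nonneg _) (by linarith)
    refine (norm_add_le _ _).trans ?_
    nlinarith

private lemma double_zero_factor {F : ℂ → ℂ} (hF : Differentiable ℂ F) {a : ℂ}
    (h0 : F a = 0) (h1 : deriv F a = 0) :
    ∃ G : ℂ → ℂ, Differentiable ℂ G ∧ ∀ z, F z = (z - a) ^ 2 * G z := by
  refine ⟨dslope (dslope F a) a, ?_, ?_⟩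
  · have t1 : DifferentiableOn ℂ (dslope F a) Set.univ :=
      (Complex.differentiableOn_dslope Filter.univ_mem).mpr hF.differentiableOn
    have t2 : DifferentiableOn ℂ (dslope (dslope F a) a) Set.univ :=
      (Complex.differentiableOn_dslope Filter.univ_mem).mpr t1
    exact differentiableOn_univ.mp t2
  · intro z
    have e1 := sub_smul_dslope F a z
    rw [h0, sub_zero] at e1
    have e2 := sub_smul_dslope (dslope F a) a z
    rw [dslope_same, h1, sub_zero] at e2
    rw [smul_eq_mul] at e1 e2
    rw [← e1, ← e2]; ring

private lemma bound_lemma (α : ℕ → ℂ) (hne : ∀ j, α j ≠ 0)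
    (hsum : Summable fun j => 1 / ‖α j‖) (h : ℂ → ℂ)
    (hprod : TendstoLocallyUniformly
      (fun N z => ∏ j ∈ Finset.range N, (1 - z / α j) ^ 2) h atTop)
    {R : ℝ} (hR : 0 < R) :
    ∃ N₀ : ℕ, ∀ z : ℂ, ‖z‖ ≤ R →
      ‖h z - ∏ j ∈ Finset.range N₀, (1 - z / α j) ^ 2‖
        ≤ 1 / 2 * ‖∏ j ∈ Finset.range N₀, (1 - z / α j) ^ 2‖ := by
  have hb : Summable (fun j => 3 * R * (1 / ‖α j‖)) := hsum.mul_left _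
  obtain ⟨s, hs⟩ := summable_iff_vanishing_norm.mp hb (1/4) (by norm_num)
  refine ⟨s.sup id + 1, ?_⟩
  set N₀ := s.sup id + 1 with hN₀
  have htail : ∀ t : Finset ℕ, (∀ i ∈ t, N₀ ≤ i) → ∑ i ∈ t, 3 * R * (1 / ‖α i‖) < 1/4 := by
    intro t ht
    have hdisj : Disjoint t s := by
      rw [Finset.disjoint_left]
      intro i hit his
      have h1 : i ≤ s.sup id := Finset.le_sup (f := id) his
      have h2 := ht i hit
      omega
    have := hs t hdisj
    calc ∑ i ∈ t, 3 * R * (1 / ‖α i‖) ≤ ‖∑ i ∈ t, 3 * R * (1 / ‖α i‖)‖ := le_abs_self _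
      _ < 1/4 := this
  have hαR : ∀ j, N₀ ≤ j → R ≤ ‖α j‖ := by
    intro j hj
    have hα : 0 < ‖α j‖ := norm_pos_iff.mpr (hne j)
    have h1 : 3 * R * (1 / ‖α j‖) < 1/4 := by
      have := htail {j} (by simpa using hj)
      simpa using this
    rw [mul_one_div, div_lt_iff₀ hα] at h1
    nlinarith
  intro z hz
  have hc : ∀ j, N₀ ≤ j → ‖(1 - z / α j) ^ 2 - 1‖ ≤ 3 * R * (1 / ‖α j‖) := by
    intro j hj
    have hα : 0 < ‖α j‖ := norm_pos_iff.mpr (hne j)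
    have hw : ‖z / α j‖ ≤ R * (1 / ‖α j‖) := by
      rw [norm_div, mul_one_div]
      gcongr
    have hw1 : ‖z / α j‖ ≤ 1 := by
      rw [norm_div, div_le_one hα]
      exact hz.trans (hαR j hj)
    have hid : (1 - z / α j) ^ 2 - 1 = (z / α j) * (z / α j - 2) := by ring
    rw [hid, norm_mul]
    have h2 : ‖z / α j - 2‖ ≤ 3 := by
      refine (norm_sub_le _ _).trans ?_
      simp only [Complex.norm_ofNat]
      linarith
    calc ‖z / α j‖ * ‖z / α j - 2‖ ≤ (R * (1 / ‖α j‖)) * 3 := by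
          apply mul_le_mul hw h2 (norm_nonneg _)
          positivity
      _ = 3 * R * (1 / ‖α j‖) := by ring
  have hNb : ∀ N, N₀ ≤ N →
      ‖(∏ j ∈ Finset.range N, (1 - z / α j) ^ 2) - ∏ j ∈ Finset.range N₀, (1 - z / α j) ^ 2‖
        ≤ 1 / 2 * ‖∏ j ∈ Finset.range N₀, (1 - z / α j) ^ 2‖ := by
    intro N hN
    set c : ℕ → ℂ := fun j => (1 - z / α j) ^ 2 - 1 with hcdef
    have hsum_le : ∑ i ∈ Finset.Ico N₀ N, ‖c i‖ ≤ 1/4 := by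
      calc ∑ i ∈ Finset.Ico N₀ N, ‖c i‖
          ≤ ∑ i ∈ Finset.Ico N₀ N, 3 * R * (1 / ‖α i‖) :=
            Finset.sum_le_sum fun i hi => hc i (Finset.mem_Ico.mp hi).1
        _ ≤ 1/4 := (htail _ fun i hi => (Finset.mem_Ico.mp hi).1).le
    have hest := prod_est (Finset.Ico N₀ N) c (by linarith)
    have hpc : (∏ i ∈ Finset.Ico N₀ N, (1 + c i)) = ∏ i ∈ Finset.Ico N₀ N, (1 - z / α i) ^ 2 :=
      Finset.prod_congr rfl fun i _ => by simp [hcdef]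
    rw [hpc] at hest
    have hsplit : (∏ j ∈ Finset.range N₀, (1 - z / α j) ^ 2)
        * ∏ j ∈ Finset.Ico N₀ N, (1 - z / α j) ^ 2
        = ∏ j ∈ Finset.range N, (1 - z / α j) ^ 2 :=
      Finset.prod_range_mul_prod_Ico _ hN
    calc ‖(∏ j ∈ Finset.range N, (1 - z / α j) ^ 2) - ∏ j ∈ Finset.range N₀, (1 - z / α j) ^ 2‖
        = ‖∏ j ∈ Finset.range N₀, (1 - z / α j) ^ 2‖
          * ‖(∏ j ∈ Finset.Ico N₀ N, (1 - z / α j) ^ 2) - 1‖ := by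
          rw [← norm_mul]; congr 1; rw [← hsplit]; ring
      _ ≤ ‖∏ j ∈ Finset.range N₀, (1 - z / α j) ^ 2‖ * (2 * ∑ i ∈ Finset.Ico N₀ N, ‖c i‖) := by
          exact mul_le_mul_of_nonneg_left hest (norm_nonneg _)
      _ ≤ ‖∏ j ∈ Finset.range N₀, (1 - z / α j) ^ 2‖ * (2 * (1/4)) := by
          exact mul_le_mul_of_nonneg_left (by linarith) (norm_nonneg _)
      _ = 1 / 2 * ‖∏ j ∈ Finset.range N₀, (1 - z / α j) ^ 2‖ := by ring
  have hpt : Tendsto (fun N => ∏ j ∈ Finset.range N, (1 - z / α j) ^ 2) atTop (𝓝 (h z)) :=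
    (tendstoLocallyUniformlyOn_univ.mpr hprod).tendsto_at (Set.mem_univ z)
  have hlim : Tendsto
      (fun N => ‖(∏ j ∈ Finset.range N, (1 - z / α j) ^ 2)
        - ∏ j ∈ Finset.range N₀, (1 - z / α j) ^ 2‖) atTop
      (𝓝 ‖h z - ∏ j ∈ Finset.range N₀, (1 - z / α j) ^ 2‖) :=
    (hpt.sub tendsto_const_nhds).norm
  exact le_of_tendsto hlim (eventually_atTop.mpr ⟨N₀, hNb⟩)

private lemma key_lemma (α : ℕ → ℂ) (hinj : Function.Injective α)
    (hne : ∀ j, α j ≠ 0) (hsum : Summable fun j => 1 / ‖α j‖) (h : ℂ → ℂ)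
    (hprod : TendstoLocallyUniformly
      (fun N z => ∏ j ∈ Finset.range N, (1 - z / α j) ^ 2) h atTop)
    (hdiff : Differentiable ℂ h)
    (z₀ : ℂ) (hz₀ : h z₀ = 0) :
    ∃ (j : ℕ) (g : ℂ → ℂ), z₀ = α j ∧ Differentiable ℂ g ∧ g z₀ ≠ 0 ∧
      ∀ z, h z = (z - z₀) ^ 2 * g z := by
  have hPdiff : ∀ N, Differentiable ℂ (fun z : ℂ => ∏ j ∈ Finset.range N, (1 - z / α j) ^ 2) :=
    fun N => Differentiable.fun_finsetProd fun i _ =>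
      ((differentiable_const (1:ℂ)).sub (differentiable_id.div_const (α i))).pow 2
  -- values and derivatives of h at the α j
  have hval : ∀ j, h (α j) = 0 := by
    intro j
    have h1 : Tendsto (fun N => ∏ i ∈ Finset.range N, (1 - α j / α i) ^ 2) atTop (𝓝 (h (α j))) :=
      (tendstoLocallyUniformlyOn_univ.mpr hprod).tendsto_at (Set.mem_univ _)
    have h2 : ∀ᶠ N in atTop, (fun N => ∏ i ∈ Finset.range N, (1 - α j / α i) ^ 2) N = 0 :=
      eventually_atTop.mpr ⟨j + 1, fun N hN =>
        Finset.prod_eq_zero (i := j) (Finset.mem_range.mpr (by omega))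
          (by simp [div_self (hne j)])⟩
    exact tendsto_nhds_unique (Tendsto.congr' h2 h1) tendsto_const_nhds
  have hder : ∀ j, deriv h (α j) = 0 := by
    intro j
    have hdc := (tendstoLocallyUniformlyOn_univ.mpr hprod).deriv
      (Eventually.of_forall fun N => (hPdiff N).differentiableOn) isOpen_univ
    have h1 : Tendsto
        (fun N => deriv (fun z : ℂ => ∏ i ∈ Finset.range N, (1 - z / α i) ^ 2) (α j)) atTop
        (𝓝 (deriv h (α j))) := hdc.tendsto_at (Set.mem_univ _)
    have h2 : ∀ᶠ N in atTop,
        deriv (fun z : ℂ => ∏ i ∈ Finset.range N, (1 - z / α i) ^ 2) (α j) = 0 := by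
      refine eventually_atTop.mpr ⟨j + 1, fun N hN => ?_⟩
      have hmem : j ∈ Finset.range N := Finset.mem_range.mpr (by omega)
      have hsplit : (fun z : ℂ => ∏ i ∈ Finset.range N, (1 - z / α i) ^ 2)
          = fun z => (1 - z / α j) ^ 2 * ∏ i ∈ (Finset.range N).erase j, (1 - z / α i) ^ 2 :=
        funext fun z => (Finset.mul_prod_erase _ _ hmem).symm
      rw [hsplit]
      have hA : HasDerivAt (fun z : ℂ => (1 - z / α j) ^ 2)
          ((2 : ℕ) * (1 - α j / α j) ^ (2 - 1) * (0 - 1 / α j)) (α j) :=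
        (((hasDerivAt_const (α j) (1:ℂ))).sub ((hasDerivAt_id (α j)).div_const (α j))).pow 2
      have hB : DifferentiableAt ℂ
          (fun z : ℂ => ∏ i ∈ (Finset.range N).erase j, (1 - z / α i) ^ 2) (α j) :=
        DifferentiableAt.fun_finsetProd fun i _ =>
          (((differentiable_const (1:ℂ)).sub (differentiable_id.div_const (α i))).pow 2).differentiableAt
      have := (hA.fun_mul hB.hasDerivAt).deriv
      rw [this]
      simp [div_self (hne j)]
    exact tendsto_nhds_unique (Tendsto.congr' h2 h1) tendsto_const_nhds
  -- locate the zero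
  have hR : (0:ℝ) < ‖z₀‖ + 1 := by positivity
  obtain ⟨N₀, hbd⟩ := bound_lemma α hne hsum h hprod hR
  have hz₀R : ‖z₀‖ ≤ ‖z₀‖ + 1 := by linarith
  have hP0 : (∏ j ∈ Finset.range N₀, (1 - z₀ / α j) ^ 2) = 0 := by
    have hb := hbd z₀ hz₀R
    rw [hz₀, zero_sub, norm_neg] at hb
    have : ‖∏ j ∈ Finset.range N₀, (1 - z₀ / α j) ^ 2‖ ≤ 0 := by linarith
    exact norm_le_zero_iff.mp this
  obtain ⟨j, hjmem, hj0⟩ := Finset.prod_eq_zero_iff.mp hP0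
  have hzj : z₀ = α j := by
    have h1 : 1 - z₀ / α j = 0 := pow_eq_zero_iff (by norm_num : (2:ℕ) ≠ 0) |>.mp hj0
    have h2 : z₀ / α j = 1 := by linear_combination -h1
    rw [div_eq_one_iff_eq (hne j)] at h2
    exact h2
  subst hzj
  obtain ⟨g, hgdiff, hfac⟩ := double_zero_factor hdiff (hval j) (hder j)
  refine ⟨j, g, rfl, hgdiff, ?_, hfac⟩
  -- lower bound to show g (α j) ≠ 0
  set q : ℂ → ℂ := fun z => ((α j)⁻¹) ^ 2 * ∏ i ∈ (Finset.range N₀).erase j, (1 - z / α i) ^ 2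
    with hqdef
  have hPq : ∀ z : ℂ, (∏ i ∈ Finset.range N₀, (1 - z / α i) ^ 2) = (z - α j) ^ 2 * q z := by
    intro z
    rw [← Finset.mul_prod_erase _ _ hjmem, hqdef]
    have hid : (1 - z / α j) ^ 2 = (z - α j) ^ 2 * ((α j)⁻¹) ^ 2 := by
      rw [one_sub_div (hne j), div_pow, div_eq_mul_inv, ← inv_pow]
      congr 1
      ring
    rw [hid]; ring
  have hq0 : q (α j) ≠ 0 := by
    refine mul_ne_zero (pow_ne_zero _ (inv_ne_zero (hne j))) ?_
    rw [Finset.prod_ne_zero_iff]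
    intro i hi
    refine pow_ne_zero _ ?_
    intro hcon
    have hij : i ≠ j := (Finset.mem_erase.mp hi).1
    have h2 : α j / α i = 1 := by linear_combination -hcon
    rw [div_eq_one_iff_eq (hne i)] at h2
    exact hij (hinj h2).symm
  have hlow : ∀ z : ℂ, ‖z‖ ≤ ‖α j‖ + 1 → z ≠ α j → 1 / 2 * ‖q z‖ ≤ ‖g z‖ := by
    intro z hzR hzne
    have hb := hbd z hzR
    have h1 : 1 / 2 * ‖∏ i ∈ Finset.range N₀, (1 - z / α i) ^ 2‖ ≤ ‖h z‖ := by
      have h2 := norm_sub_norm_le (∏ i ∈ Finset.range N₀, (1 - z / α i) ^ 2) (h z)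
      rw [norm_sub_rev] at h2
      linarith
    rw [hfac z, hPq z] at h1
    rw [norm_mul ((z - α j) ^ 2) (q z), norm_mul ((z - α j) ^ 2) (g z)] at h1
    have hp : 0 < ‖(z - α j) ^ 2‖ := norm_pos_iff.mpr (pow_ne_zero _ (sub_ne_zero.mpr hzne))
    rw [← mul_le_mul_iff_of_pos_left hp]
    calc ‖(z - α j) ^ 2‖ * (1 / 2 * ‖q z‖) = 1 / 2 * (‖(z - α j) ^ 2‖ * ‖q z‖) := by ring
      _ ≤ ‖(z - α j) ^ 2‖ * ‖g z‖ := h1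
  have hqcont : Continuous q := by
    apply continuous_const.mul
    exact continuous_finset_prod _ fun i _ =>
      ((continuous_const.sub (continuous_id.div_const (α i))).pow 2)
  have hev : ∀ᶠ z in 𝓝[≠] (α j), 1 / 2 * ‖q z‖ ≤ ‖g z‖ := by
    have hball : ∀ᶠ z in 𝓝 (α j), ‖z‖ ≤ ‖α j‖ + 1 := by
      have hmem : closedBall (0:ℂ) (‖α j‖ + 1) ∈ 𝓝 (α j) :=
        closedBall_mem_nhds_of_mem (by simp only [mem_ball, dist_zero_right]; linarith)
      filter_upwards [hmem] with z hz
      simpa [mem_closedBall, dist_eq_norm] using hz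
    filter_upwards [hball.filter_mono nhdsWithin_le_nhds, self_mem_nhdsWithin] with z h1 h2
    exact hlow z h1 h2
  have hle : 1 / 2 * ‖q (α j)‖ ≤ ‖g (α j)‖ := by
    refine le_of_tendsto_of_tendsto ?_ ?_ hev
    · exact ((hqcont.norm.continuousAt (x := α j)).const_smul (1/2 : ℝ)).tendsto.mono_left
        nhdsWithin_le_nhds
    · exact (hgdiff.continuous.norm.continuousAt (x := α j)).tendsto.mono_left nhdsWithin_le_nhds
  have hq0' : 0 < ‖q (α j)‖ := norm_pos_iff.mpr hq0
  intro hcon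
  rw [hcon, norm_zero] at hle
  linarith

theorem divisible_by_product (α : ℕ → ℂ) (hinj : Function.Injective α)
    (hne : ∀ j, α j ≠ 0) (hsum : Summable fun j => 1 / ‖α j‖)
    (h : ℂ → ℂ)
    (hprod : TendstoLocallyUniformly
      (fun N z => ∏ j ∈ Finset.range N, (1 - z / α j) ^ 2) h atTop)
    (f : ℂ → ℂ) (hf : Differentiable ℂ f)
    (hvanish : ∀ j, f (α j) = 0 ∧ deriv f (α j) = 0) :
    ∃ u : ℂ → ℂ, Differentiable ℂ u ∧ ∀ z, f z = h z * u z := by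
  classical
  have hPdiff : ∀ N, Differentiable ℂ (fun z : ℂ => ∏ j ∈ Finset.range N, (1 - z / α j) ^ 2) :=
    fun N => Differentiable.fun_finsetProd fun i _ =>
      ((differentiable_const (1:ℂ)).sub (differentiable_id.div_const (α i))).pow 2
  have hdiff : Differentiable ℂ h := by
    have := (tendstoLocallyUniformlyOn_univ.mpr hprod).differentiableOn
      (Eventually.of_forall fun N => (hPdiff N).differentiableOn) isOpen_univ
    exact differentiableOn_univ.mp this
  set u : ℂ → ℂ := fun z => limUnder (𝓝[≠] z) (fun w => f w / h w) with hu
  have ustep : ∀ w, h w ≠ 0 → u w = f w / h w := by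
    intro w hw
    have hc : ContinuousAt (fun x => f x / h x) w :=
      (hf.continuous.continuousAt).div (hdiff.continuous.continuousAt) hw
    exact (hc.tendsto.mono_left nhdsWithin_le_nhds).limUnder_eq
  have hopen : IsOpen {w : ℂ | h w ≠ 0} := by
    have : {w : ℂ | h w ≠ 0} = h ⁻¹' {0}ᶜ := rfl
    rw [this]
    exact isOpen_compl_singleton.preimage hdiff.continuous
  refine ⟨u, ?_, ?_⟩
  · intro z
    by_cases hz : h z = 0
    · obtain ⟨j, g, hzj, hgdiff, hg0, hfac⟩ := key_lemma α hinj hne hsum h hprod hdiff z hz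
      obtain ⟨ψ, hψdiff, hψfac⟩ := double_zero_factor hf (a := z)
        (by rw [hzj]; exact (hvanish j).1) (by rw [hzj]; exact (hvanish j).2)
      have hgopen : IsOpen {w : ℂ | g w ≠ 0} := by
        have : {w : ℂ | g w ≠ 0} = g ⁻¹' {0}ᶜ := rfl
        rw [this]
        exact isOpen_compl_singleton.preimage hgdiff.continuous
      have huv : ∀ w, g w ≠ 0 → u w = ψ w / g w := by
        intro w hgw
        rcases eq_or_ne w z with rfl | hwz
        · have hev : (fun x => f x / h x) =ᶠ[𝓝[≠] w] fun x => ψ x / g x := by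
            filter_upwards [nhdsWithin_le_nhds (hgopen.mem_nhds hgw),
              self_mem_nhdsWithin] with x hxV hxw
            rw [hψfac x, hfac x]
            exact mul_div_mul_left _ _ (pow_ne_zero 2 (sub_ne_zero.mpr hxw))
          have ht : Tendsto (fun x => ψ x / g x) (𝓝[≠] w) (𝓝 (ψ w / g w)) :=
            (((hψdiff.continuous.continuousAt).div (hgdiff.continuous.continuousAt)
              hgw).tendsto).mono_left nhdsWithin_le_nhds
          exact (ht.congr' hev.symm).limUnder_eq
        · have hhw : h w ≠ 0 := by
            rw [hfac w]
            exact mul_ne_zero (pow_ne_zero _ (sub_ne_zero.mpr hwz)) hgw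
          rw [ustep w hhw, hψfac w, hfac w]
          exact mul_div_mul_left _ _ (pow_ne_zero 2 (sub_ne_zero.mpr hwz))
      have huev : u =ᶠ[𝓝 z] fun w => ψ w / g w := by
        filter_upwards [hgopen.mem_nhds hg0] with w hw using huv w hw
      exact ((hψdiff.differentiableAt).div hgdiff.differentiableAt hg0).congr_of_eventuallyEq huev
    · have huev : u =ᶠ[𝓝 z] fun w => f w / h w := by
        filter_upwards [hopen.mem_nhds hz] with w hw using ustep w hw
      exact ((hf.differentiableAt).div hdiff.differentiableAt hz).congr_of_eventuallyEq huev
  · intro z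
    by_cases hz : h z = 0
    · obtain ⟨j, g, hzj, -, -, -⟩ := key_lemma α hinj hne hsum h hprod hdiff z hz
      rw [hz, zero_mul, hzj]
      exact (hvanish j).1
    · rw [ustep z hz]
      field_simp
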